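/- Let H be a real Hilbert space, A : H → H a continuous self-adjoint nonnegative linear operator, 0 ≤ p ≤ 1, γ ≥ 1, and u₀ ∈ H with ⟨Au₀,u₀⟩ > 0. Let u : [0,∞) → H be a C¹ solution of u'(t) + (1+t)^{p} ⟨Au(t),u(t)⟩^γ A u(t) = 0 with u(0) = u₀. Then there exist positive constants γ₃ and γ₄ (depending only on u₀, A, γ, p) such that for all t ≥ 0: γ₃ (1+t)^{−(p+1)/γ} ≤ ⟨Au(t),u(t)⟩ ≤ γ₄ (1+t)^{−(p+1)/(γ+1)}. -/

import Mathlib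

open Real
open scoped RealInnerProductSpace

lemma op_cs {H : Type*} [NormedAddCommGroup H] [InnerProductSpace ℝ H]
    (A : H →L[ℝ] H)
    (hA_sa : ∀ x y : H, ⟪A x, y⟫ = ⟪x, A y⟫)
    (hA_nn : ∀ x : H, 0 ≤ ⟪A x, x⟫) (x : H) :
    ‖A x‖^2 ≤ ‖A‖ * ⟪A x, x⟫ := by
  set a : ℝ := ⟪A x, x⟫ with ha
  set b : ℝ := ‖A x‖^2 with hb
  have hb0 : 0 ≤ b := sq_nonneg _
  have ha0 : 0 ≤ a := hA_nn x
  set c : ℝ := ⟪A (A x), A x⟫ with hc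
  have hq : ∀ l : ℝ, 0 ≤ c - 2*l*b + l^2*a := by
    intro l
    have h := hA_nn (A x - l • x)
    have hsa : ⟪A (A x), x⟫ = b := by
      rw [hA_sa]; simp [hb, real_inner_self_eq_norm_sq]
    have : ⟪A (A x - l • x), A x - l • x⟫ = c - 2*l*b + l^2*a := by
      simp only [map_sub, map_smul, inner_sub_left, inner_sub_right,
        real_inner_smul_left, real_inner_smul_right, hsa,
        real_inner_self_eq_norm_sq, ← hb, ← ha, ← hc]
      ring
    linarith [this ▸ h]
  rcases eq_or_lt_of_le hb0 with hb' | hb'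
  · rw [← hb']; positivity
  have ha' : 0 < a := by
    rcases eq_or_lt_of_le ha0 with ha' | ha'
    · exfalso
      have hx2 := hq ((c+1)/(2*b))
      rw [← ha', mul_zero, add_zero] at hx2
      have he : 2*((c+1)/(2*b))*b = c+1 := by field_simp
      linarith
    · exact ha'
  have key : b^2 ≤ a * c := by
    have := hq (b/a)
    have h2 : c - 2*(b/a)*b + (b/a)^2*a = c - b^2/a := by field_simp; ring
    rw [h2] at this
    nlinarith [div_nonneg (sq_nonneg b) ha0, (div_le_iff₀ ha').mp (by linarith : b^2/a ≤ c)]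
  have hcb : c ≤ ‖A‖ * b := by
    calc c ≤ ‖A (A x)‖ * ‖A x‖ := real_inner_le_norm _ _
    _ ≤ (‖A‖ * ‖A x‖) * ‖A x‖ := by
        apply mul_le_mul_of_nonneg_right (A.le_opNorm _) (norm_nonneg _)
    _ = ‖A‖ * b := by rw [hb]; ring
  nlinarith [norm_nonneg A]

/-- `u` (with derivative `u'`) is a global C¹ solution on `[0,∞)` of the parabolic
Cauchy problem `u' + (1+t)^{p} ⟨Au,u⟩^γ A u = 0`, `u(0) = u₀`. -/
def IsParSolution {H : Type*} [NormedAddCommGroup H] [InnerProductSpace ℝ H]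
    (A : H →L[ℝ] H) (p γ : ℝ) (u₀ : H) (u u' : ℝ → H) : Prop :=
  u 0 = u₀ ∧
  (∀ t ∈ Set.Ici (0:ℝ), HasDerivWithinAt u (u' t) (Set.Ici 0) t) ∧
  ContinuousOn u' (Set.Ici 0) ∧
  (∀ t ∈ Set.Ici (0:ℝ),
    u' t + ((1+t) ^ p * ⟪A (u t), u t⟫ ^ γ) • A (u t) = 0)

theorem parabolic_decay_two_sided'
    {H : Type*} [NormedAddCommGroup H] [InnerProductSpace ℝ H]
    (A : H →L[ℝ] H)
    (hA_sa : ∀ x y : H, ⟪A x, y⟫ = ⟪x, A y⟫)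
    (hA_nn : ∀ x : H, 0 ≤ ⟪A x, x⟫)
    (p γ : ℝ) (hp0 : 0 ≤ p) (hp1 : p ≤ 1) (hγ : 1 ≤ γ)
    (u₀ : H) (hmdg : 0 < ⟪A u₀, u₀⟫)
    (u u' : ℝ → H)
    (hu0 : u 0 = u₀)
    (hud : ∀ t ∈ Set.Ici (0:ℝ), HasDerivWithinAt u (u' t) (Set.Ici 0) t)
    (hode : ∀ t ∈ Set.Ici (0:ℝ),
      u' t + ((1+t) ^ p * ⟪A (u t), u t⟫ ^ γ) • A (u t) = 0) :
    ∃ γ₃ > 0, ∃ γ₄ > 0, ∀ t ∈ Set.Ici (0:ℝ),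
      γ₃ * (1+t) ^ (-(p+1)/γ) ≤ ⟪A (u t), u t⟫ ∧
      ⟪A (u t), u t⟫ ≤ γ₄ * (1+t) ^ (-(p+1)/(γ+1)) := by
  set f : ℝ → ℝ := fun t => ⟪A (u t), u t⟫ with hfdef
  set F : ℝ → ℝ := fun t => -(2 * ((1+t)^p * (f t)^γ) * ‖A (u t)‖^2) with hFdef
  have hγ0 : (0:ℝ) < γ := by linarith
  have hp1' : (0:ℝ) < p + 1 := by linarith
  have hfnn : ∀ t, 0 ≤ f t := fun t => hA_nn _
  have hf0 : f 0 = ⟪A u₀, u₀⟫ := by simp [hfdef, hu0]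
  have hf0pos : 0 < f 0 := by rw [hf0]; exact hmdg
  have hode' : ∀ t ∈ Set.Ici (0:ℝ), u' t = (-((1+t) ^ p * (f t) ^ γ)) • A (u t) := by
    intro t ht
    have := hode t ht
    rw [add_eq_zero_iff_eq_neg] at this
    rw [this, neg_smul]
  -- the derivative of f
  have hf' : ∀ t ∈ Set.Ici (0:ℝ), HasDerivWithinAt f (F t) (Set.Ici 0) t := by
    intro t ht
    have hAu : HasDerivWithinAt (fun s => A (u s)) (A (u' t)) (Set.Ici 0) t :=
      A.hasFDerivAt.comp_hasDerivWithinAt t (hud t ht)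
    have hin := HasDerivWithinAt.inner ℝ hAu (hud t ht)
    have h1 : ⟪A (u t), u' t⟫ = -((1+t)^p * (f t)^γ) * ‖A (u t)‖^2 := by
      rw [hode' t ht, real_inner_smul_right, real_inner_self_eq_norm_sq]
    have h2 : ⟪A (u' t), u t⟫ = -((1+t)^p * (f t)^γ) * ‖A (u t)‖^2 := by
      rw [hA_sa, hode' t ht, real_inner_smul_left, real_inner_self_eq_norm_sq]
    have : ⟪A (u t), u' t⟫ + ⟪A (u' t), u t⟫ = F t := by rw [h1, h2, hFdef]; ring
    rw [this] at hin
    exact hin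
  have hfc : ContinuousOn f (Set.Ici 0) := fun t ht => (hf' t ht).continuousWithinAt
  have hFnp : ∀ t, 0 ≤ t → F t ≤ 0 := by
    intro t ht
    have h1 : (0:ℝ) ≤ (1+t)^p := rpow_nonneg (by linarith) _
    have h2 : (0:ℝ) ≤ (f t)^γ := rpow_nonneg (hfnn t) _
    have h3 : (0:ℝ) ≤ ‖A (u t)‖^2 := sq_nonneg _
    simp only [hFdef, neg_nonpos]
    positivity
  -- f is antitone
  have hfant : AntitoneOn f (Set.Ici 0) := by
    apply antitoneOn_of_hasDerivWithinAt_nonpos (convex_Ici 0) hfc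
    · intro x hx
      rw [interior_Ici] at hx ⊢
      exact ((hf' x (Set.mem_Ici.mpr (le_of_lt (Set.mem_Ioi.mp hx)))).mono (Set.Ioi_subset_Ici le_rfl))
    · intro x hx
      rw [interior_Ici] at hx
      exact hFnp x (le_of_lt hx)
  -- positivity of f
  have hfpos : ∀ t ∈ Set.Ici (0:ℝ), 0 < f t := by
    intro T hT
    have h1T : (0:ℝ) ≤ T := hT
    have hTp : (0:ℝ) ≤ (1+T)^p := rpow_nonneg (by linarith) _
    have hf0γ : (0:ℝ) ≤ (f 0)^γ := rpow_nonneg (hfnn 0) _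
    set C : ℝ := 2*‖A‖*((1+T)^p*(f 0)^γ) with hCdef
    have hC : 0 ≤ C := by positivity
    set φ : ℝ → ℝ := fun s => f s * Real.exp (C*s) with hφdef
    have hφmono : MonotoneOn φ (Set.Icc 0 T) := by
      apply monotoneOn_of_hasDerivWithinAt_nonneg (convex_Icc 0 T)
        (f' := fun x => F x * Real.exp (C*x) + f x * (Real.exp (C*x) * (C*1)))
      · exact (hfc.mono Set.Icc_subset_Ici_self).mul
          (Real.continuous_exp.comp (continuous_const.mul continuous_id)).continuousOn
      · intro x hx
        rw [interior_Icc] at hx ⊢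
        have hxI : x ∈ Set.Ici (0:ℝ) := le_of_lt hx.1
        have hfx : HasDerivAt f (F x) x := (hf' x hxI).hasDerivAt (Ici_mem_nhds hx.1)
        have hex : HasDerivAt (fun y => Real.exp (C*y)) (Real.exp (C*x) * (C*1)) x :=
          ((hasDerivAt_id x).const_mul C).exp
        exact (hfx.mul hex).hasDerivWithinAt
      · intro x hx
        rw [interior_Icc] at hx
        have hxI : x ∈ Set.Ici (0:ℝ) := le_of_lt hx.1
        have hcs := op_cs A hA_sa hA_nn (u x)
        have hfx0 : f x ≤ f 0 := hfant Set.self_mem_Ici hxI (le_of_lt hx.1)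
        have h1 : (1+x)^p ≤ (1+T)^p :=
          rpow_le_rpow (by linarith [hx.1]) (by linarith [hx.2]) hp0
        have h2 : (f x)^γ ≤ (f 0)^γ := rpow_le_rpow (hfnn x) hfx0 (le_of_lt hγ0)
        have hxp : (0:ℝ) ≤ (1+x)^p := rpow_nonneg (by linarith [hx.1]) _
        have hxγ : (0:ℝ) ≤ (f x)^γ := rpow_nonneg (hfnn x) _
        have key : F x + C * f x ≥ 0 := by
          have s1 : (1+x)^p*(f x)^γ*‖A (u x)‖^2 ≤ (1+x)^p*(f x)^γ*(‖A‖ * f x) :=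
            mul_le_mul_of_nonneg_left hcs (mul_nonneg hxp hxγ)
          have s2 : (1+x)^p*(f x)^γ ≤ (1+T)^p*(f 0)^γ := mul_le_mul h1 h2 hxγ hTp
          have s3 : (1+x)^p*(f x)^γ*(‖A‖ * f x) ≤ (1+T)^p*(f 0)^γ*(‖A‖ * f x) := by
            apply mul_le_mul_of_nonneg_right s2 (mul_nonneg (norm_nonneg _) (hfnn x))
          have hFx : F x = -(2 * ((1+x)^p * (f x)^γ) * ‖A (u x)‖^2) := rfl
          rw [hFx, hCdef]
          linarith [s1, s3]
        have hepos := Real.exp_pos (C*x)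
        have h0 : 0 ≤ (F x + C * f x) * Real.exp (C*x) := mul_nonneg key (le_of_lt hepos)
        have heq : F x * Real.exp (C*x) + f x * (Real.exp (C*x) * (C*1))
            = (F x + C * f x) * Real.exp (C*x) := by ring
        rw [heq]
        exact h0
    have hle : φ 0 ≤ φ T :=
      hφmono (Set.left_mem_Icc.mpr h1T) (Set.right_mem_Icc.mpr h1T) h1T
    have hφ0 : φ 0 = f 0 := by simp [hφdef]
    have hepos := Real.exp_pos (C*T)
    by_contra hcon
    push_neg at hcon
    have : φ T ≤ 0 := mul_nonpos_of_nonpos_of_nonneg hcon (le_of_lt hepos)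
    linarith [hφ0 ▸ hle]
  -- LOWER BOUND
  set k : ℝ := 2*γ*‖A‖/(p+1) with hkdef
  have hk : 0 ≤ k := by positivity
  set D : ℝ := (f 0)^(-γ) + k with hDdef
  have hg0pos : 0 < (f 0)^(-γ) := rpow_pos_of_pos hf0pos _
  have hDpos : 0 < D := by positivity
  have hglb : ∀ t ∈ Set.Ici (0:ℝ), (f t)^(-γ) ≤ D * (1+t)^(p+1) := by
    set w : ℝ → ℝ := fun t => (f 0)^(-γ) + k*((1+t)^(p+1) - 1) - (f t)^(-γ) with hwdef
    have hwmono : MonotoneOn w (Set.Ici 0) := by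
      apply monotoneOn_of_hasDerivWithinAt_nonneg (convex_Ici 0)
        (f' := fun x => k*(1*(p+1)*(1+x)^(p+1-1)) - F x * (-γ) * (f x)^(-γ-1))
      · apply ContinuousOn.sub
        · apply ContinuousOn.add continuousOn_const
          exact continuousOn_const.mul
            (((continuousOn_const.add continuousOn_id).rpow_const
              (fun t _ => Or.inr (by linarith))).sub continuousOn_const)
        · exact hfc.rpow_const (fun t ht => Or.inl (ne_of_gt (hfpos t ht)))
      · intro x hx
        rw [interior_Ici] at hx ⊢
        have hxI : x ∈ Set.Ici (0:ℝ) := Set.mem_Ici.mpr (le_of_lt (Set.mem_Ioi.mp hx))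
        have hfx : HasDerivAt f (F x) x := (hf' x hxI).hasDerivAt (Ici_mem_nhds hx)
        have hpart1 : HasDerivAt (fun y => k*((1+y)^(p+1) - 1))
            (k*(1*(p+1)*(1+x)^(p+1-1))) x := by
          have h0 : HasDerivAt (fun y : ℝ => 1+y) 1 x := (hasDerivAt_id x).const_add 1
          exact (((h0.rpow_const (Or.inr (by linarith))).sub_const 1).const_mul k)
        have hpart2 : HasDerivAt (fun y => (f y)^(-γ)) (F x * (-γ) * (f x)^(-γ-1)) x :=
          hfx.rpow_const (Or.inl (ne_of_gt (hfpos x hxI)))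
        exact (((hpart1.const_add _).sub hpart2)).hasDerivWithinAt
      · intro x hx
        rw [interior_Ici] at hx
        have hx0 : (0:ℝ) < x := hx
        have hxI : x ∈ Set.Ici (0:ℝ) := Set.mem_Ici.mpr (le_of_lt (Set.mem_Ioi.mp hx))
        have hfxpos := hfpos x hxI
        have hxp : (0:ℝ) < (1+x)^p := rpow_pos_of_pos (by linarith) _
        have hsplit : (f x)^(-γ-1) = ((f x)^γ)⁻¹ * (f x)⁻¹ := by
          rw [show -γ-1 = (-γ) + (-1) by ring, Real.rpow_add hfxpos,
            Real.rpow_neg (hfnn x), Real.rpow_neg_one]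
        have hfγpos : 0 < (f x)^γ := rpow_pos_of_pos hfxpos γ
        have e1 : F x * (-γ) * (f x)^(-γ-1)
            = 2*γ*((1+x)^p * (‖A (u x)‖^2 * (f x)⁻¹)) := by
          have hFx : F x = -(2 * ((1+x)^p * (f x)^γ) * ‖A (u x)‖^2) := rfl
          rw [hFx, hsplit]
          field_simp
        have e2 : k*(1*(p+1)*(1+x)^(p+1-1)) = 2*γ*((1+x)^p * ‖A‖) := by
          rw [show p+1-1 = p by ring, hkdef]
          field_simp
        rw [e1, e2, sub_nonneg]
        have hb : ‖A (u x)‖^2 * (f x)⁻¹ ≤ ‖A‖ := by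
          rw [← div_eq_mul_inv, div_le_iff₀ hfxpos]
          exact op_cs A hA_sa hA_nn (u x)
        have hb2 : (1+x)^p * (‖A (u x)‖^2 * (f x)⁻¹) ≤ (1+x)^p * ‖A‖ :=
          mul_le_mul_of_nonneg_left hb (le_of_lt hxp)
        exact mul_le_mul_of_nonneg_left hb2 (by positivity)
    intro t ht
    have hw0 : w 0 = 0 := by simp [hwdef]
    have := hwmono Set.self_mem_Ici ht ht
    rw [hw0] at this
    have ht0 : (0:ℝ) ≤ t := ht
    have hX1 : (1:ℝ) ≤ (1+t)^(p+1) := by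
      calc (1:ℝ) = (1:ℝ)^(p+1) := (one_rpow _).symm
      _ ≤ (1+t)^(p+1) := rpow_le_rpow zero_le_one (by linarith) (by linarith)
    have hw : (f t)^(-γ) ≤ (f 0)^(-γ) + k*((1+t)^(p+1) - 1) := by
      simp only [hwdef] at this; linarith
    have : (f 0)^(-γ) + k*((1+t)^(p+1) - 1) ≤ D * (1+t)^(p+1) := by
      rw [hDdef]
      nlinarith [hg0pos, hk, hX1]
    linarith
  -- convert lower bound
  have hγne : γ ≠ 0 := ne_of_gt hγ0
  set γ₃ : ℝ := D^(-1/γ) with hγ₃def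
  have hγ₃pos : 0 < γ₃ := rpow_pos_of_pos hDpos _
  have hlower : ∀ t ∈ Set.Ici (0:ℝ), γ₃ * (1+t) ^ (-(p+1)/γ) ≤ f t := by
    intro t ht
    have ht0 : (0:ℝ) ≤ t := ht
    have h1t : (0:ℝ) < 1+t := by linarith
    have hfpt := hfpos t ht
    have hgpos : 0 < (f t)^(-γ) := rpow_pos_of_pos hfpt _
    have hXpos : 0 < (1+t)^(p+1) := rpow_pos_of_pos h1t _
    have hmain := hglb t ht
    have hstep : (D * (1+t)^(p+1))^(-1/γ) ≤ ((f t)^(-γ))^(-1/γ) :=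
      rpow_le_rpow_of_nonpos hgpos hmain
        (div_nonpos_of_nonpos_of_nonneg (by linarith) (by linarith))
    have hL : ((f t)^(-γ))^(-1/γ) = f t := by
      rw [← Real.rpow_mul (hfnn t), show (-γ)*(-1/γ) = 1 by field_simp, Real.rpow_one]
    have hR : (D * (1+t)^(p+1))^(-1/γ)
        = D^(-1/γ) * (1+t)^(-(p+1)/γ) := by
      rw [Real.mul_rpow (le_of_lt hDpos) (le_of_lt hXpos),
        ← Real.rpow_mul (by linarith : (0:ℝ) ≤ 1+t),
        show (p+1)*(-1/γ) = -(p+1)/γ by ring]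
    rw [hγ₃def, ← hL, ← hR]
    exact hstep
  -- UPPER BOUND
  set E : ℝ → ℝ := fun t => ⟪u t, u t⟫ with hEdef
  have hEnn : ∀ t, 0 ≤ E t := fun t => real_inner_self_nonneg
  set m : ℝ → ℝ := fun t => (2/(p+1)) * ((1+t)^(p+1) - 1) with hmdef
  have hmnn : ∀ t, 0 ≤ t → 0 ≤ m t := by
    intro t ht
    have hX1 : (1:ℝ) ≤ (1+t)^(p+1) := by
      calc (1:ℝ) = (1:ℝ)^(p+1) := (one_rpow _).symm
      _ ≤ (1+t)^(p+1) := rpow_le_rpow zero_le_one (by linarith) (by linarith)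
    have h1 : (0:ℝ) ≤ 2/(p+1) := by positivity
    have h2 : (0:ℝ) ≤ (1+t)^(p+1) - 1 := by linarith
    exact mul_nonneg h1 h2
  set h : ℝ → ℝ := fun t => (f t)^(γ+1) * m t + E t with hhdef
  have hucont : ContinuousOn u (Set.Ici 0) := fun t ht => (hud t ht).continuousWithinAt
  have hhant : AntitoneOn h (Set.Ici 0) := by
    apply antitoneOn_of_hasDerivWithinAt_nonpos (convex_Ici 0)
      (f' := fun x => (F x*(γ+1)*(f x)^(γ+1-1)) * m x
        + (f x)^(γ+1) * ((2/(p+1))*(1*(p+1)*(1+x)^(p+1-1)))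
        + (-((1+x)^p * (f x)^γ) * f x + -((1+x)^p * (f x)^γ) * f x))
    · apply ContinuousOn.add
      · exact (hfc.rpow_const (fun t _ => Or.inr (by linarith))).mul
          (continuousOn_const.mul
            (((continuousOn_const.add continuousOn_id).rpow_const
              (fun t _ => Or.inr (by linarith))).sub continuousOn_const))
      · exact hucont.inner hucont
    · intro x hx
      rw [interior_Ici] at hx ⊢
      have hx0 : (0:ℝ) < x := hx
      have hxI : x ∈ Set.Ici (0:ℝ) := le_of_lt hx0
      have hfx : HasDerivAt f (F x) x := (hf' x hxI).hasDerivAt (Ici_mem_nhds hx0)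
      have h1 : HasDerivAt (fun y => (f y)^(γ+1)) (F x*(γ+1)*(f x)^(γ+1-1)) x :=
        hfx.rpow_const (Or.inr (by linarith))
      have h0 : HasDerivAt (fun y : ℝ => 1+y) 1 x := (hasDerivAt_id x).const_add 1
      have h2 : HasDerivAt m ((2/(p+1))*(1*(p+1)*(1+x)^(p+1-1))) x :=
        ((h0.rpow_const (Or.inr (by linarith))).sub_const 1).const_mul (2/(p+1))
      have hux : HasDerivAt u (u' x) x := (hud x hxI).hasDerivAt (Ici_mem_nhds hx0)
      have h3 : HasDerivAt E (⟪u x, u' x⟫ + ⟪u' x, u x⟫) x := HasDerivAt.inner ℝ hux hux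
      have e1 : ⟪u x, u' x⟫ = -((1+x)^p * (f x)^γ) * f x := by
        rw [hode' x hxI, real_inner_smul_right, ← hA_sa]
      have e2 : ⟪u' x, u x⟫ = -((1+x)^p * (f x)^γ) * f x := by
        rw [hode' x hxI, real_inner_smul_left]
      rw [e1, e2] at h3
      exact (((h1.mul h2).add h3)).hasDerivWithinAt
    · intro x hx
      rw [interior_Ici] at hx
      have hx0 : (0:ℝ) < x := hx
      have hxI : x ∈ Set.Ici (0:ℝ) := le_of_lt hx0
      have t1 : (F x*(γ+1)*(f x)^(γ+1-1)) * m x ≤ 0 := by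
        apply mul_nonpos_of_nonpos_of_nonneg ?_ (hmnn x (le_of_lt hx0))
        apply mul_nonpos_of_nonpos_of_nonneg ?_ (rpow_nonneg (hfnn x) _)
        exact mul_nonpos_of_nonpos_of_nonneg (hFnp x (le_of_lt hx0)) (by linarith)
      have t2 : (f x)^(γ+1) * ((2/(p+1))*(1*(p+1)*(1+x)^(p+1-1)))
          + (-((1+x)^p * (f x)^γ) * f x + -((1+x)^p * (f x)^γ) * f x) = 0 := by
        have hsplit : (f x)^(γ+1) = (f x)^γ * f x := by
          rw [Real.rpow_add' (hfnn x) (by linarith), Real.rpow_one]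
        rw [hsplit, show p+1-1 = p by ring]
        field_simp
        ring
      rw [add_assoc, t2, add_zero]
      exact t1
  have hh0 : h 0 = ⟪u₀, u₀⟫ := by
    simp [hhdef, hmdef, hEdef, hu0]
  have hkey : ∀ t ∈ Set.Ici (0:ℝ), (f t)^(γ+1) * m t ≤ ⟪u₀, u₀⟫ := by
    intro t ht
    have h1 := hhant Set.self_mem_Ici ht ht
    rw [hh0] at h1
    have h2 : h t = (f t)^(γ+1)*m t + E t := rfl
    rw [h2] at h1
    linarith [hEnn t]
  -- final assembly
  set c₀ : ℝ := ⟪u₀, u₀⟫ with hc₀def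
  have hc₀ : 0 ≤ c₀ := real_inner_self_nonneg
  set K : ℝ := c₀ * (p+1) with hKdef
  have hK : 0 ≤ K := by positivity
  have hγ1 : (0:ℝ) < γ+1 := by linarith
  have hKr : (0:ℝ) ≤ K^(1/(γ+1)) := rpow_nonneg hK _
  set γ₄ : ℝ := 2 * f 0 + K^(1/(γ+1)) with hγ₄def
  have hγ₄pos : 0 < γ₄ := by rw [hγ₄def]; linarith
  refine ⟨γ₃, hγ₃pos, γ₄, hγ₄pos, fun t ht => ⟨hlower t ht, ?_⟩⟩
  have ht0 : (0:ℝ) ≤ t := ht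
  have h1t : (0:ℝ) < 1+t := by linarith
  have hXpos : (0:ℝ) < (1+t)^(p+1) := rpow_pos_of_pos h1t _
  set e : ℝ := (p+1)/(γ+1) with hedef
  have hepos : 0 < e := by positivity
  have hee : -(p+1)/(γ+1) = -e := by rw [hedef]; ring
  rcases le_or_gt t 1 with hcase | hcase
  · -- small t
    have hfle : f t ≤ f 0 := hfant Set.self_mem_Ici ht ht0
    have he1 : e ≤ 1 := by rw [hedef, div_le_one hγ1]; linarith
    have hpe : 0 < (1+t)^e := rpow_pos_of_pos h1t e
    have h2e : (1+t)^e ≤ 2 := by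
      calc (1+t)^e ≤ 2^e := rpow_le_rpow (by linarith) (by linarith) (le_of_lt hepos)
      _ ≤ 2^(1:ℝ) := rpow_le_rpow_of_exponent_le one_le_two he1
      _ = 2 := rpow_one 2
    have hinv : (1:ℝ)/2 ≤ (1+t)^(-e) := by
      rw [Real.rpow_neg (by linarith), one_div]
      exact inv_anti₀ hpe h2e
    rw [hee]
    have hnegpos : (0:ℝ) < (1+t)^(-e) := rpow_pos_of_pos h1t _
    calc f t ≤ f 0 := hfle
    _ = (2 * f 0) * (1/2) := by ring
    _ ≤ (2 * f 0) * ((1+t)^(-e)) := by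
        apply mul_le_mul_of_nonneg_left hinv (by linarith)
    _ ≤ γ₄ * (1+t)^(-e) := by
        apply mul_le_mul_of_nonneg_right ?_ (le_of_lt hnegpos)
        rw [hγ₄def]; linarith
  · -- large t
    have hkey1 := hkey t ht
    have hX2 : (2:ℝ) ≤ (1+t)^(p+1) := by
      calc (2:ℝ) ≤ 1+t := by linarith
      _ = (1+t)^(1:ℝ) := (rpow_one _).symm
      _ ≤ (1+t)^(p+1) := rpow_le_rpow_of_exponent_le (by linarith) (by linarith)
    have hmt : (p+1) * m t = 2*((1+t)^(p+1) - 1) := by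
      rw [hmdef]
      field_simp
    have hmge : (1+t)^(p+1) ≤ (p+1) * m t := by rw [hmt]; linarith
    have hfγ1 : (0:ℝ) ≤ (f t)^(γ+1) := rpow_nonneg (hfnn t) _
    have hstep : (f t)^(γ+1) * (1+t)^(p+1) ≤ K := by
      calc (f t)^(γ+1) * (1+t)^(p+1) ≤ (f t)^(γ+1) * ((p+1)*m t) :=
            mul_le_mul_of_nonneg_left hmge hfγ1
      _ = (p+1) * ((f t)^(γ+1) * m t) := by ring
      _ ≤ (p+1) * c₀ := mul_le_mul_of_nonneg_left hkey1 (le_of_lt hp1')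
      _ = K := by rw [hKdef]; ring
    have hfK : (f t)^(γ+1) ≤ K * (1+t)^(-(p+1)) := by
      rw [Real.rpow_neg (by linarith), ← div_eq_mul_inv, le_div_iff₀ hXpos]
      exact hstep
    have hpow := rpow_le_rpow hfγ1 hfK (by positivity : (0:ℝ) ≤ 1/(γ+1))
    have hLHS : ((f t)^(γ+1))^(1/(γ+1)) = f t := by
      rw [← Real.rpow_mul (hfnn t), mul_one_div, div_self (ne_of_gt hγ1), Real.rpow_one]
    have hRHS : (K * (1+t)^(-(p+1)))^(1/(γ+1))
        = K^(1/(γ+1)) * (1+t)^(-(p+1)/(γ+1)) := by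
      rw [Real.mul_rpow hK (rpow_nonneg (by linarith) _),
        ← Real.rpow_mul (by linarith : (0:ℝ) ≤ 1+t),
        show -(p+1)*(1/(γ+1)) = -(p+1)/(γ+1) by ring]
    rw [hLHS, hRHS] at hpow
    have hnegpos : (0:ℝ) < (1+t)^(-(p+1)/(γ+1)) := rpow_pos_of_pos h1t _
    calc f t ≤ K^(1/(γ+1)) * (1+t)^(-(p+1)/(γ+1)) := hpow
    _ ≤ γ₄ * (1+t)^(-(p+1)/(γ+1)) := by
        apply mul_le_mul_of_nonneg_right ?_ (le_of_lt hnegpos)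
        rw [hγ₄def]; linarith


/-- Decay estimate (3.3): `γ₃ (1+t)^{-(p+1)/γ} ≤ ⟨Au(t),u(t)⟩ ≤ γ₄ (1+t)^{-(p+1)/(γ+1)}`. -/
theorem parabolic_decay_two_sided
    {H : Type*} [NormedAddCommGroup H] [InnerProductSpace ℝ H]
    (A : H →L[ℝ] H)
    (hA_sa : ∀ x y : H, ⟪A x, y⟫ = ⟪x, A y⟫)
    (hA_nn : ∀ x : H, 0 ≤ ⟪A x, x⟫)
    (p γ : ℝ) (hp0 : 0 ≤ p) (hp1 : p ≤ 1) (hγ : 1 ≤ γ)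
    (u₀ : H) (hmdg : 0 < ⟪A u₀, u₀⟫)
    (u u' : ℝ → H) (hu : IsParSolution A p γ u₀ u u') :
    ∃ γ₃ > 0, ∃ γ₄ > 0, ∀ t ∈ Set.Ici (0:ℝ),
      γ₃ * (1+t) ^ (-(p+1)/γ) ≤ ⟪A (u t), u t⟫ ∧
      ⟪A (u t), u t⟫ ≤ γ₄ * (1+t) ^ (-(p+1)/(γ+1)) := by
  obtain ⟨hu0, hud, _, hode⟩ := hu
  exact parabolic_decay_two_sided' A hA_sa hA_nn p γ hp0 hp1 hγ u₀ hmdg u u' hu0 hud hode
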